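/- arXiv:1312.2520 — 3 statements merged into one kernel-verified Lean document; each statement's English description precedes it below -/
import Mathlib

section
/- Let m, n > 0 be integers. A step sequence u = (u₁, …, u_n) ∈ D_n^(m) is meet-irreducible in the m-Tamari lattice T_n^(m) (i.e., it has exactly one upper cover in the rotation order) if and only if there exist i ∈ {1, …, n−1} and a ∈ {1, …, mi} such that u_j = 0 for all j ≤ i and u_j = a for all j > i. -/
/-- The set `D_n^(m)` of m-Dyck paths of length `(m+1)n`, encoded as step sequences:
weakly increasing `u : Fin n → ℕ` with `u_k ≤ m(k−1)` (1-indexed), i.e. `u k ≤ m·k`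
(0-indexed). -/
def DyckM (m n : ℕ) : Type :=
  {u : Fin n → ℕ // Monotone u ∧ ∀ k : Fin n, u k ≤ m * (k : ℕ)}

/-- The rotation cover relation on step sequences: `v` is obtained from `u` by choosing a
position `i ≥ 2` (1-indexed; here `i ≥ 1`, 0-indexed) with `u_{i−1} < u_i` and
decreasing every entry of the primitive subsequence of `u` at position `i` (which ends
at position `k`) by one. -/
def RotCovBy (m n : ℕ) (u v : Fin n → ℕ) : Prop :=
  ∃ i k : Fin n, (0 : ℕ) < (i : ℕ) ∧ (i : ℕ) ≤ (k : ℕ) ∧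
    (∀ j : Fin n, (j : ℕ) + 1 = (i : ℕ) → u j < u i) ∧
    (∀ j : Fin n, (i : ℕ) < (j : ℕ) → (j : ℕ) ≤ (k : ℕ) →
      u j - u i < m * ((j : ℕ) - (i : ℕ))) ∧
    ((k : ℕ) + 1 = n ∨
      ∀ j : Fin n, (j : ℕ) = (k : ℕ) + 1 → m * ((j : ℕ) - (i : ℕ)) ≤ u j - u i) ∧
    (∀ j : Fin n, v j = if (i : ℕ) ≤ (j : ℕ) ∧ (j : ℕ) ≤ (k : ℕ) then u j - 1 else u j)

/-- The rotation order `≤_rot` on `D_n^(m)`: the reflexive-transitive closure of the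
rotation cover relation.  The m-Tamari lattice is `T_n^(m) = (D_n^(m), ≤_rot)`. -/
def TamariLe (m n : ℕ) : DyckM m n → DyckM m n → Prop :=
  Relation.ReflTransGen (fun a b => RotCovBy m n a.1 b.1)

/-- `b` covers `a` with respect to the relation `r` (playing the role of `≤`). -/
def RelCovBy {β : Type*} (r : β → β → Prop) (a b : β) : Prop :=
  r a b ∧ a ≠ b ∧ ∀ c, r a c → r c b → c = a ∨ c = b

/-- `x` is meet-irreducible w.r.t. the order relation `r`: non-maximal with exactly one
upper cover. -/
def RelMeetIrred {β : Type*} (r : β → β → Prop) (x : β) : Prop :=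
  (∃ y, r x y ∧ x ≠ y) ∧ ∃! y, RelCovBy r x y

/-- `x` is join-irreducible w.r.t. the order relation `r`: non-minimal with exactly one
lower cover. -/
def RelJoinIrred {β : Type*} (r : β → β → Prop) (x : β) : Prop :=
  (∃ y, r y x ∧ x ≠ y) ∧ ∃! y, RelCovBy r y x

namespace Stmt14

variable {m n : ℕ}

/-- The decremented sequence. -/
def vfun (u : Fin n → ℕ) (i k : ℕ) : Fin n → ℕ :=
  fun j => if i ≤ (j : ℕ) ∧ (j : ℕ) ≤ k then u j - 1 else u j

def predF (i : Fin n) : Fin n := ⟨(i : ℕ) - 1, lt_of_le_of_lt (Nat.sub_le _ _) i.isLt⟩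

lemma rot_pw {u v : Fin n → ℕ} (h : RotCovBy m n u v) : ∀ j, v j ≤ u j := by
  obtain ⟨i, k, _, _, _, _, _, hv⟩ := h
  intro j; rw [hv j]; split <;> omega

lemma le_pw {a b : DyckM m n} (h : TamariLe m n a b) : ∀ j, b.1 j ≤ a.1 j := by
  induction h with
  | refl => exact fun j => le_rfl
  | tail _ hbc ih => exact fun j => (rot_pw hbc j).trans (ih j)

lemma asc_pos {u : Fin n → ℕ} {i : Fin n} (hi : 0 < (i : ℕ))
    (hasc : ∀ j : Fin n, (j : ℕ) + 1 = (i : ℕ) → u j < u i) : 1 ≤ u i := by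
  have hlt : (i : ℕ) - 1 < n := lt_of_le_of_lt (Nat.sub_le _ _) i.isLt
  have := hasc ⟨(i : ℕ) - 1, hlt⟩ (by simp; omega)
  omega

lemma straddle {α : Type*} {r : α → α → Prop} {P : α → Prop} {a b : α}
    (h : Relation.ReflTransGen r a b) (ha : P a) (hb : ¬ P b) :
    ∃ x y, Relation.ReflTransGen r a x ∧ r x y ∧ Relation.ReflTransGen r y b ∧
      P x ∧ ¬ P y := by
  induction h using Relation.ReflTransGen.head_induction_on with
  | refl => exact absurd ha hb
  | @head a' c' hac hcb ih =>
    by_cases hc : P c'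
    · obtain ⟨x, y, h1, h2, h3, h4, h5⟩ := ih hc
      exact ⟨x, y, Relation.ReflTransGen.head hac h1, h2, h3, h4, h5⟩
    · exact ⟨_, _, Relation.ReflTransGen.refl, hac, hcb, ha, hc⟩


/-- Rigidity: inside the interval of a rotation of `u` at `(i,k)`, any rotation step
`x → y` (with `x` sandwiched between `vfun u i k` and `u`) that decrements position `i`
must be the full rotation: `x = u` and `y = vfun u i k`. -/
lemma rigid {u x y : Fin n → ℕ} {i k : Fin n}
    (hxmono : Monotone x)
    (hi : 0 < (i : ℕ)) (hik : (i : ℕ) ≤ (k : ℕ))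
    (hasc : ∀ j : Fin n, (j : ℕ) + 1 = (i : ℕ) → u j < u i)
    (hprim : ∀ j : Fin n, (i : ℕ) < (j : ℕ) → (j : ℕ) ≤ (k : ℕ) →
      u j - u i < m * ((j : ℕ) - (i : ℕ)))
    (step : RotCovBy m n x y)
    (hxu : ∀ j, x j ≤ u j)
    (hvx : ∀ j, vfun u i k j ≤ x j)
    (hxi : x i = u i)
    (hyi : y i < x i)
    (hvy : ∀ j, vfun u i k j ≤ y j) :
    x = u ∧ y = vfun u (i : ℕ) (k : ℕ) := by
  obtain ⟨i', k', hi', hik', hasc', hprim', hend', hy'⟩ := step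
  have hxi1 : 1 ≤ x i' := asc_pos hi' hasc'
  have hxmem : ∀ j : Fin n, (i' : ℕ) ≤ (j : ℕ) → 1 ≤ x j := by
    intro j h1
    exact le_trans hxi1 (hxmono (Fin.le_def.mpr h1))
  -- the interval [i',k'] is contained in [i,k]
  have hsubset : ∀ j : Fin n, (i' : ℕ) ≤ (j : ℕ) → (j : ℕ) ≤ (k' : ℕ) →
      (i : ℕ) ≤ (j : ℕ) ∧ (j : ℕ) ≤ (k : ℕ) := by
    intro j h1 h2
    by_contra hcon
    have h3 : y j = x j - 1 := by rw [hy' j, if_pos ⟨h1, h2⟩]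
    have h4 := hxmem j h1
    have h5 := hvy j
    have h6 : vfun u (i : ℕ) (k : ℕ) j = u j := by unfold vfun; rw [if_neg hcon]
    have h7 := hxu j
    omega
  -- i belongs to [i',k']
  have hii' : (i' : ℕ) ≤ (i : ℕ) ∧ (i : ℕ) ≤ (k' : ℕ) := by
    by_contra hcon
    have : y i = x i := by rw [hy' i, if_neg hcon]
    omega
  have hie : (i' : ℕ) = (i : ℕ) :=
    le_antisymm hii'.1 (hsubset i' le_rfl hik').1
  have hieF : i = i' := (Fin.ext hie).symm
  subst hieF
  have hkk' : (k' : ℕ) ≤ (k : ℕ) := (hsubset k' hik' le_rfl).2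
  have hke : (k' : ℕ) = (k : ℕ) := by
    rcases Nat.lt_or_ge (k' : ℕ) (k : ℕ) with hlt | hge
    · exfalso
      have hn1 : (k' : ℕ) + 1 < n := by have := k.isLt; omega
      rcases hend' with h | h
      · omega
      · set j : Fin n := ⟨(k' : ℕ) + 1, hn1⟩ with hjdef
        have h1 := h j rfl
        have h2 := hprim j (by simp [hjdef]; omega) (by simp [hjdef]; omega)
        have h3 := hxu j
        rw [hxi] at h1
        omega
    · omega
  have hkeF : k = k' := (Fin.ext hke).symm
  subst hkeF
  have hx : ∀ j, x j = u j := by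
    intro j
    by_cases hj : (i : ℕ) ≤ (j : ℕ) ∧ (j : ℕ) ≤ (k : ℕ)
    · have h1 := hvy j
      have h2 : vfun u (i : ℕ) (k : ℕ) j = u j - 1 := by unfold vfun; rw [if_pos hj]
      have h3 : y j = x j - 1 := by rw [hy' j, if_pos hj]
      have h4 := hxmem j hj.1
      have h5 := hxu j
      omega
    · have h1 := hvx j
      have h2 : vfun u (i : ℕ) (k : ℕ) j = u j := by unfold vfun; rw [if_neg hj]
      have h3 := hxu j
      omega
  have hxf : x = u := funext hx
  refine ⟨hxf, funext fun j => ?_⟩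
  rw [hy' j]
  unfold vfun
  by_cases hj : (i : ℕ) ≤ (j : ℕ) ∧ (j : ℕ) ≤ (k : ℕ)
  · rw [if_pos hj, if_pos hj, hx j]
  · rw [if_neg hj, if_neg hj, hx j]


/-- No element strictly between `u` and its rotation `v`. -/
lemma covMain {u v : DyckM m n} {i k : Fin n}
    (hi : 0 < (i : ℕ)) (hik : (i : ℕ) ≤ (k : ℕ))
    (hasc : ∀ j : Fin n, (j : ℕ) + 1 = (i : ℕ) → u.1 j < u.1 i)
    (hprim : ∀ j : Fin n, (i : ℕ) < (j : ℕ) → (j : ℕ) ≤ (k : ℕ) →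
      u.1 j - u.1 i < m * ((j : ℕ) - (i : ℕ)))
    (hv : v.1 = vfun u.1 (i : ℕ) (k : ℕ)) :
    ∀ c : DyckM m n, TamariLe m n u c → TamariLe m n c v → c = u ∨ c = v := by
  intro c huc hcv
  have hcu := le_pw huc
  have hvc := le_pw hcv
  have hui : 1 ≤ u.1 i := asc_pos hi hasc
  have hvi : v.1 i = u.1 i - 1 := by rw [hv]; unfold vfun; rw [if_pos ⟨le_rfl, hik⟩]
  by_cases hci : c.1 i = u.1 i
  · left
    have hPv : ¬ ((fun z : DyckM m n => z.1 i = u.1 i) v) := by show ¬ (v.1 i = u.1 i); omega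
    obtain ⟨x, y, hcx, hxy, hyv, hPx, hPy⟩ :=
      straddle (P := fun z : DyckM m n => z.1 i = u.1 i) hcv hci hPv
    have hxc := le_pw hcx
    have hvy2 := le_pw hyv
    have hyx := rot_pw hxy
    have hr := rigid (m := m) x.2.1 hi hik hasc hprim hxy
      (fun j => (hxc j).trans (hcu j))
      (fun j => hv ▸ ((hvy2 j).trans (hyx j)))
      hPx
      (by
        have h1 := hyx i
        have h2 := hvy2 i
        have hPx' : x.1 i = u.1 i := hPx
        have hPy' : ¬ (y.1 i = u.1 i) := hPy
        omega)
      (fun j => hv ▸ hvy2 j)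
    apply Subtype.ext; funext j
    have h1 := hxc j
    have h2 := hcu j
    have h3 := congrFun hr.1 j
    omega
  · right
    obtain ⟨x, y, hux, hxy, hyc, hPx, hPy⟩ :=
      straddle (P := fun z : DyckM m n => z.1 i = u.1 i) huc rfl hci
    have hxu2 := le_pw hux
    have hcy := le_pw hyc
    have hyx := rot_pw hxy
    have hr := rigid (m := m) x.2.1 hi hik hasc hprim hxy
      hxu2
      (fun j => hv ▸ ((hvc j).trans ((hcy j).trans (hyx j))))
      hPx
      (by
        have h1 := hyx i
        have h2 := (hvc i).trans (hcy i)
        have hPx' : x.1 i = u.1 i := hPx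
        have hPy' : ¬ (y.1 i = u.1 i) := hPy
        omega)
      (fun j => hv ▸ ((hvc j).trans (hcy j)))
    apply Subtype.ext; funext j
    have h1 := hcy j
    have h2 := hvc j
    have h3 := congrFun hr.2 j
    rw [← hv] at h3
    omega

/-- Order covers coincide with rotation covers. -/
lemma cov_iff {u v : DyckM m n} :
    RelCovBy (TamariLe m n) u v ↔ RotCovBy m n u.1 v.1 := by
  constructor
  · rintro ⟨hle, hne, hmin⟩
    rcases (Relation.ReflTransGen.cases_head hle) with h | ⟨c, hc, hcb⟩
    · exact absurd h hne
    · rcases hmin c (Relation.ReflTransGen.single hc) hcb with h | h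
      · exfalso
        obtain ⟨i, k, hi, hik, hasc, _, _, hcf⟩ := hc
        have h1 := asc_pos hi hasc
        have h2 := hcf i
        rw [if_pos ⟨le_rfl, hik⟩] at h2
        rw [h] at h2
        omega
      · exact h ▸ hc
  · intro hr
    obtain ⟨i, k, hi, hik, hasc, hprim, hend, hvf⟩ := hr
    refine ⟨Relation.ReflTransGen.single ⟨i, k, hi, hik, hasc, hprim, hend, hvf⟩, ?_, ?_⟩
    · intro he
      have h1 := asc_pos hi hasc
      have h2 := hvf i
      rw [if_pos ⟨le_rfl, hik⟩, ← he] at h2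
      omega
    · exact covMain hi hik hasc hprim (funext hvf)


def IsAsc (u : DyckM m n) (i : Fin n) : Prop :=
  0 < (i : ℕ) ∧ u.1 (predF i) < u.1 i

lemma isAsc_of_cond {u : DyckM m n} {i : Fin n} (hi : 0 < (i : ℕ))
    (hasc : ∀ j : Fin n, (j : ℕ) + 1 = (i : ℕ) → u.1 j < u.1 i) : IsAsc u i :=
  ⟨hi, hasc (predF i) (by simp [predF]; omega)⟩

lemma cond_of_isAsc {u : DyckM m n} {i : Fin n} (h : IsAsc u i) :
    ∀ j : Fin n, (j : ℕ) + 1 = (i : ℕ) → u.1 j < u.1 i := by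
  intro j hj
  have : j = predF i := Fin.ext (by simp [predF]; omega)
  rw [this]; exact h.2

/-- Existence of the primitive end `k` for a rotation at `i`. -/
lemma exists_k (u : DyckM m n) (i : Fin n) :
    ∃ k : Fin n, (i : ℕ) ≤ (k : ℕ) ∧
      (∀ j : Fin n, (i : ℕ) < (j : ℕ) → (j : ℕ) ≤ (k : ℕ) →
        u.1 j - u.1 i < m * ((j : ℕ) - (i : ℕ))) ∧
      ((k : ℕ) + 1 = n ∨
        ∀ j : Fin n, (j : ℕ) = (k : ℕ) + 1 → m * ((j : ℕ) - (i : ℕ)) ≤ u.1 j - u.1 i) := by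
  classical
  set P : ℕ → Prop := fun t => ∀ j : Fin n, (i : ℕ) < (j : ℕ) → (j : ℕ) ≤ t →
    u.1 j - u.1 i < m * ((j : ℕ) - (i : ℕ)) with hP
  have hPi : P (i : ℕ) := by intro j h1 h2; omega
  have hin : (i : ℕ) ≤ n - 1 := by have := i.isLt; omega
  have hiK : (i : ℕ) ≤ Nat.findGreatest P (n - 1) := Nat.le_findGreatest hin hPi
  have hKle : Nat.findGreatest P (n - 1) ≤ n - 1 := Nat.findGreatest_le _
  have hKn : Nat.findGreatest P (n - 1) < n := by have := i.isLt; omega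
  have hPK : P (Nat.findGreatest P (n - 1)) := Nat.findGreatest_spec hin hPi
  refine ⟨⟨Nat.findGreatest P (n - 1), hKn⟩, hiK, hPK, ?_⟩
  by_cases hKend : Nat.findGreatest P (n - 1) + 1 = n
  · left; exact hKend
  · right
    intro j hj
    have hnP : ¬ P (Nat.findGreatest P (n - 1) + 1) :=
      Nat.findGreatest_is_greatest (Nat.lt_succ_self _) (by omega)
    have hnP2 : ¬ ∀ j : Fin n, (i : ℕ) < (j : ℕ) →
        (j : ℕ) ≤ Nat.findGreatest P (n - 1) + 1 →
        u.1 j - u.1 i < m * ((j : ℕ) - (i : ℕ)) := hnP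
    push_neg at hnP2
    obtain ⟨j', h1, h2, h3⟩ := hnP2
    have hje : (j' : ℕ) = Nat.findGreatest P (n - 1) + 1 := by
      by_contra hx
      exact absurd (hPK j' h1 (by omega)) (by omega)
    have : j = j' := Fin.ext (by simp at hj ⊢; omega)
    rw [this]
    exact h3


lemma vfun_mem (u : DyckM m n) {i k : Fin n} (hAsc : IsAsc u i) (hik : (i : ℕ) ≤ (k : ℕ)) :
    Monotone (vfun u.1 (i : ℕ) (k : ℕ)) ∧
      ∀ j : Fin n, vfun u.1 (i : ℕ) (k : ℕ) j ≤ m * (j : ℕ) := by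
  obtain ⟨hi, hlt⟩ := hAsc
  constructor
  · intro a b hab
    have hab' : (a : ℕ) ≤ (b : ℕ) := hab
    have hm1 : u.1 a ≤ u.1 b := u.2.1 hab
    unfold vfun
    by_cases ha : (i : ℕ) ≤ (a : ℕ) ∧ (a : ℕ) ≤ (k : ℕ)
    · by_cases hb : (i : ℕ) ≤ (b : ℕ) ∧ (b : ℕ) ≤ (k : ℕ)
      · rw [if_pos ha, if_pos hb]; omega
      · rw [if_pos ha, if_neg hb]; omega
    · by_cases hb : (i : ℕ) ≤ (b : ℕ) ∧ (b : ℕ) ≤ (k : ℕ)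
      · have ha' : (a : ℕ) < (i : ℕ) := by omega
        have h2 : u.1 a ≤ u.1 (predF i) :=
          u.2.1 (Fin.le_def.mpr (by simp [predF]; omega))
        have h3 : u.1 i ≤ u.1 b := u.2.1 (Fin.le_def.mpr (by omega))
        rw [if_neg ha, if_pos hb]
        omega
      · rw [if_neg ha, if_neg hb]; exact hm1
  · intro j
    have := u.2.2 j
    unfold vfun
    split <;> omega

/-- Each ascent gives rise to a rotation successor. -/
lemma succ_of_asc (u : DyckM m n) {i : Fin n} (hAsc : IsAsc u i) :
    ∃ (v : DyckM m n) (k : Fin n), (i : ℕ) ≤ (k : ℕ) ∧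
      (∀ j : Fin n, (i : ℕ) < (j : ℕ) → (j : ℕ) ≤ (k : ℕ) →
        u.1 j - u.1 i < m * ((j : ℕ) - (i : ℕ))) ∧
      ((k : ℕ) + 1 = n ∨
        ∀ j : Fin n, (j : ℕ) = (k : ℕ) + 1 → m * ((j : ℕ) - (i : ℕ)) ≤ u.1 j - u.1 i) ∧
      v.1 = vfun u.1 (i : ℕ) (k : ℕ) ∧ RotCovBy m n u.1 v.1 := by
  obtain ⟨k, hik, hprim, hend⟩ := exists_k (m := m) u i
  obtain ⟨hmono, hbd⟩ := vfun_mem u hAsc hik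
  refine ⟨⟨vfun u.1 (i : ℕ) (k : ℕ), hmono, hbd⟩, k, hik, hprim, hend, rfl, ?_⟩
  exact ⟨i, k, hAsc.1, hik, cond_of_isAsc hAsc, hprim, hend, fun j => rfl⟩

/-- The primitive end is unique. -/
lemma k_unique {u : Fin n → ℕ} {i k k' : Fin n} (hik : (i : ℕ) ≤ (k : ℕ)) (hik' : (i : ℕ) ≤ (k' : ℕ))
    (hprim : ∀ j : Fin n, (i : ℕ) < (j : ℕ) → (j : ℕ) ≤ (k : ℕ) →
      u j - u i < m * ((j : ℕ) - (i : ℕ)))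
    (hend : (k : ℕ) + 1 = n ∨
      ∀ j : Fin n, (j : ℕ) = (k : ℕ) + 1 → m * ((j : ℕ) - (i : ℕ)) ≤ u j - u i)
    (hprim' : ∀ j : Fin n, (i : ℕ) < (j : ℕ) → (j : ℕ) ≤ (k' : ℕ) →
      u j - u i < m * ((j : ℕ) - (i : ℕ)))
    (hend' : (k' : ℕ) + 1 = n ∨
      ∀ j : Fin n, (j : ℕ) = (k' : ℕ) + 1 → m * ((j : ℕ) - (i : ℕ)) ≤ u j - u i) :
    (k : ℕ) = (k' : ℕ) := by
  have key : ∀ a b : Fin n, (i : ℕ) ≤ (a : ℕ) →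
      ((a : ℕ) + 1 = n ∨
        ∀ j : Fin n, (j : ℕ) = (a : ℕ) + 1 → m * ((j : ℕ) - (i : ℕ)) ≤ u j - u i) →
      (∀ j : Fin n, (i : ℕ) < (j : ℕ) → (j : ℕ) ≤ (b : ℕ) →
        u j - u i < m * ((j : ℕ) - (i : ℕ))) →
      ¬ ((a : ℕ) < (b : ℕ)) := by
    intro a b hia henda hprimb hab
    have hn1 : (a : ℕ) + 1 < n := by have := b.isLt; omega
    rcases henda with h | h
    · omega
    · have h1 := h ⟨(a : ℕ) + 1, hn1⟩ rfl
      have h2 := hprimb ⟨(a : ℕ) + 1, hn1⟩ (by simp; omega) (by simp; omega)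
      omega
  have h1 := key k k' hik hend hprim'
  have h2 := key k' k hik' hend' hprim
  omega


/-- Meet-irreducibility is the same as having a unique rotation successor. -/
lemma mi_iff {u : DyckM m n} :
    RelMeetIrred (TamariLe m n) u ↔ ∃! v : DyckM m n, RotCovBy m n u.1 v.1 := by
  constructor
  · rintro ⟨-, v, hcv, huniq⟩
    exact ⟨v, cov_iff.mp hcv, fun y hy => huniq y (cov_iff.mpr hy)⟩
  · rintro ⟨v, hv, huniq⟩
    have hcv := cov_iff.mpr hv
    exact ⟨⟨v, hcv.1, hcv.2.1⟩, v, hcv, fun y hy => huniq y (cov_iff.mp hy)⟩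

/-- Unique rotation successor iff unique ascent. -/
lemma usucc_iff_uasc {u : DyckM m n} :
    (∃! v : DyckM m n, RotCovBy m n u.1 v.1) ↔
      (∃ i : Fin n, IsAsc u i ∧ ∀ i', IsAsc u i' → i' = i) := by
  constructor
  · rintro ⟨v, hv, huniq⟩
    obtain ⟨i, k, hi, hik, hasc, hprim, hend, hvf⟩ := hv
    refine ⟨i, isAsc_of_cond hi hasc, ?_⟩
    intro i' hAsc'
    obtain ⟨v', k', hik', hprim', hend', hvf', hrot'⟩ := succ_of_asc (m := m) u hAsc'
    have hvv : v' = v := huniq v' hrot'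
    have hui : 1 ≤ u.1 i := asc_pos hi hasc
    have hui' : 1 ≤ u.1 i' := asc_pos hAsc'.1 (cond_of_isAsc hAsc')
    apply Fin.ext
    rcases lt_trichotomy (i' : ℕ) (i : ℕ) with h | h | h
    · exfalso
      have e1 : v'.1 i' = u.1 i' - 1 := by
        rw [hvf']; unfold vfun; rw [if_pos ⟨le_rfl, hik'⟩]
      have e2 : v.1 i' = u.1 i' := hvf i' |>.trans (by rw [if_neg (by omega)])
      rw [hvv] at e1
      omega
    · exact h
    · exfalso
      have e1 : v.1 i = u.1 i - 1 := (hvf i).trans (by rw [if_pos ⟨le_rfl, hik⟩])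
      have e2 : v'.1 i = u.1 i := by
        rw [hvf']; unfold vfun; rw [if_neg (by omega)]
      rw [hvv] at e2
      omega
  · rintro ⟨i, hAsc, huniq⟩
    obtain ⟨v, k, hik, hprim, hend, hvf, hrot⟩ := succ_of_asc (m := m) u hAsc
    refine ⟨v, hrot, ?_⟩
    intro v' hrot'
    obtain ⟨i₂, k₂, hi₂, hik₂, hasc₂, hprim₂, hend₂, hvf₂⟩ := hrot'
    have hieq : i₂ = i := huniq i₂ (isAsc_of_cond hi₂ hasc₂)
    subst hieq
    have hkeq : (k₂ : ℕ) = (k : ℕ) := k_unique hik₂ hik hprim₂ hend₂ hprim hend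
    apply Subtype.ext
    funext j
    rw [hvf₂ j, hvf]
    unfold vfun
    rw [hkeq]


lemma shape_of_uasc {u : DyckM m n} {i₀ : Fin n}
    (hAsc : IsAsc u i₀) (huniq : ∀ i', IsAsc u i' → i' = i₀) :
    ∃ i a : ℕ, 1 ≤ i ∧ i ≤ n - 1 ∧ 1 ≤ a ∧ a ≤ m * i ∧
      ∀ j : Fin n, ((j : ℕ) < i → u.1 j = 0) ∧ (i ≤ (j : ℕ) → u.1 j = a) := by
  have hnoasc : ∀ j : Fin n, 0 < (j : ℕ) → (j : ℕ) ≠ (i₀ : ℕ) →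
      u.1 j ≤ u.1 (predF j) := by
    intro j h1 h2
    by_contra hb
    exact h2 (congrArg Fin.val (huniq j ⟨h1, by omega⟩))
  have hmono : ∀ j : Fin n, u.1 (predF j) ≤ u.1 j :=
    fun j => u.2.1 (Fin.le_def.mpr (Nat.sub_le _ _))
  have hzero : ∀ N : ℕ, ∀ j : Fin n, (j : ℕ) = N → (j : ℕ) < (i₀ : ℕ) → u.1 j = 0 := by
    intro N
    induction N using Nat.strong_induction_on with
    | _ N ih =>
      intro j hj hlt
      rcases Nat.eq_zero_or_pos N with h0 | hpos
      · have hb := u.2.2 j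
        have : m * (j : ℕ) = 0 := by rw [hj, h0, Nat.mul_zero]
        omega
      · have h1 := hnoasc j (by omega) (by omega)
        have h2 : u.1 (predF j) = 0 :=
          ih (N - 1) (by omega) (predF j) (by simp [predF]; omega) (by simp [predF]; omega)
        omega
  have hconst : ∀ N : ℕ, ∀ j : Fin n, (j : ℕ) = N → (i₀ : ℕ) ≤ (j : ℕ) →
      u.1 j = u.1 i₀ := by
    intro N
    induction N using Nat.strong_induction_on with
    | _ N ih =>
      intro j hj hge
      rcases Nat.eq_or_lt_of_le hge with heq | hlt
      · rw [show j = i₀ from Fin.ext heq.symm]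
      · have h1 := hnoasc j (by have := hAsc.1; omega) (by omega)
        have h2 := hmono j
        have h3 : u.1 (predF j) = u.1 i₀ :=
          ih (N - 1) (by have := hAsc.1; omega) (predF j) (by simp [predF]; omega)
            (by simp [predF]; omega)
        omega
  have hp0 : u.1 (predF i₀) = 0 := by
    rcases Nat.eq_zero_or_pos (i₀ : ℕ) with h | h
    · exact absurd hAsc.1 (by omega)
    · exact hzero _ (predF i₀) rfl (by simp [predF]; omega)
  refine ⟨(i₀ : ℕ), u.1 i₀, hAsc.1, by have := i₀.isLt; omega, by have := hAsc.2; omega,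
    u.2.2 i₀, ?_⟩
  intro j
  exact ⟨fun h => hzero _ j rfl h, fun h => hconst _ j rfl h⟩

lemma uasc_of_shape (hn : 0 < n) {u : DyckM m n} {i a : ℕ}
    (h1 : 1 ≤ i) (h2 : i ≤ n - 1) (h3 : 1 ≤ a)
    (hval : ∀ j : Fin n, ((j : ℕ) < i → u.1 j = 0) ∧ (i ≤ (j : ℕ) → u.1 j = a)) :
    ∃ i₀ : Fin n, IsAsc u i₀ ∧ ∀ i', IsAsc u i' → i' = i₀ := by
  have hin : i < n := by omega
  refine ⟨⟨i, hin⟩, ⟨h1, ?_⟩, ?_⟩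
  · have e1 : u.1 (predF ⟨i, hin⟩) = 0 := (hval _).1 (by simp [predF]; omega)
    have e2 : u.1 ⟨i, hin⟩ = a := (hval _).2 (by simp)
    omega
  · rintro i' ⟨hi', hlt⟩
    apply Fin.ext
    show (i' : ℕ) = i
    have hc1 : (predF i' : ℕ) < i := by
      by_contra hx
      have e1 : u.1 (predF i') = a := (hval _).2 (by omega)
      have e2 : u.1 i' ≤ a := by
        rcases Nat.lt_or_ge (i' : ℕ) i with h | h
        · have := (hval i').1 h; omega
        · have := (hval i').2 h; omega
      omega
    have hc2 : i ≤ (i' : ℕ) := by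
      by_contra hx
      have e1 : u.1 i' = 0 := (hval i').1 (by omega)
      omega
    simp [predF] at hc1
    omega

end Stmt14

/-- A step sequence `u ∈ D_n^(m)` is meet-irreducible in the m-Tamari lattice iff
`u = (0,…,0,a,…,a)` with the `0`s in positions `1,…,i` and `a ∈ {1,…,mi}`, for some
`i ∈ {1,…,n−1}`. -/
theorem stmt_14 (m n : ℕ) (hm : 0 < m) (hn : 0 < n) (u : DyckM m n) :
    RelMeetIrred (TamariLe m n) u ↔
      ∃ i a : ℕ, 1 ≤ i ∧ i ≤ n - 1 ∧ 1 ≤ a ∧ a ≤ m * i ∧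
        ∀ j : Fin n, ((j : ℕ) < i → u.1 j = 0) ∧ (i ≤ (j : ℕ) → u.1 j = a) := by
  rw [Stmt14.mi_iff, Stmt14.usucc_iff_uasc]
  constructor
  · rintro ⟨i₀, hAsc, huniq⟩
    exact Stmt14.shape_of_uasc hAsc huniq
  · rintro ⟨i, a, h1, h2, h3, _h4, hval⟩
    exact Stmt14.uasc_of_shape hn h1 h2 h3 hval
end

section
/- Let m, n > 0 be integers and let u ∈ D_n^(m) have height sequence (h₁, …, h_{mn}). Then for each i ∈ {1, …, m} the sequence (h_i, h_{i+m}, h_{i+2m}, …, h_{i+(n−1)m}) is the height sequence of a Dyck path q_i ∈ D_n; the resulting strip-decomposition map δ : D_n^(m) → (D_n)^m, u ↦ (q₁, …, q_m), is injective; and every image tuple is increasing in dominance order: q₁ ≤_dom q₂ ≤_dom ⋯ ≤_dom q_m. -/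
/-- The height sequence of a step sequence `u : Fin n → ℕ`:
`h_k = max { j ∈ {1,…,n} : u_j < k }` (1-indexed in both `j` and `k`). -/
noncomputable def heightSeq (n : ℕ) (u : Fin n → ℕ) (k : ℕ) : ℕ :=
  sSup {j : ℕ | ∃ h : j - 1 < n, 1 ≤ j ∧ u ⟨j - 1, h⟩ < k}

/-- The step sequence of the Dyck path in `D_n` whose height sequence is
`(g 1, g 2, …, g n)`: its `j`-th entry (0-indexed) is `#{ t ∈ {1,…,n} : g t < j + 1 }`. -/
noncomputable def stepOfHeight (n : ℕ) (g : ℕ → ℕ) : Fin n → ℕ :=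
  fun j => Set.ncard {t : ℕ | 1 ≤ t ∧ t ≤ n ∧ g t < (j : ℕ) + 1}

/-- The strip decomposition `δ : D_n^(m) → (D_n)^m`: the `i`-th component (1-indexed `i`)
is the Dyck path whose height sequence is `(h_i, h_{i+m}, …, h_{i+(n−1)m})`, where
`(h_1, …, h_{mn})` is the height sequence of `u`. -/
noncomputable def strip (m n : ℕ) (u : Fin n → ℕ) : Fin m → Fin n → ℕ :=
  fun i => stepOfHeight n (fun t => heightSeq n u (((i : ℕ) + 1) + (t - 1) * m))

lemma hs_bdd {n : ℕ} {u : Fin n → ℕ} {k : ℕ} :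
    BddAbove {j : ℕ | ∃ h : j - 1 < n, 1 ≤ j ∧ u ⟨j - 1, h⟩ < k} :=
  ⟨n, fun x hx => by obtain ⟨h, h1, _⟩ := hx; omega⟩

lemma hs_le_n {n : ℕ} {u : Fin n → ℕ} {k : ℕ} : heightSeq n u k ≤ n :=
  csSup_le' (fun j hj => by obtain ⟨h, h1, _⟩ := hj; omega)

lemma hs_mono {n : ℕ} {u : Fin n → ℕ} {k k' : ℕ} (hk : k ≤ k') :
    heightSeq n u k ≤ heightSeq n u k' := by
  apply csSup_le'
  rintro j ⟨h, h1, hlt⟩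
  exact le_csSup hs_bdd ⟨h, h1, lt_of_lt_of_le hlt hk⟩

lemma hs_iff {n : ℕ} {u : Fin n → ℕ} (hu : Monotone u) {j k : ℕ}
    (hj1 : 1 ≤ j) (hjn : j - 1 < n) :
    j ≤ heightSeq n u k ↔ u ⟨j - 1, hjn⟩ < k := by
  constructor
  · intro hle
    have hne : {j : ℕ | ∃ h : j - 1 < n, 1 ≤ j ∧ u ⟨j - 1, h⟩ < k}.Nonempty := by
      by_contra hc
      rw [Set.not_nonempty_iff_eq_empty] at hc
      rw [heightSeq, hc, csSup_empty] at hle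
      simp at hle
      omega
    have hX : heightSeq n u k ∈ {j : ℕ | ∃ h : j - 1 < n, 1 ≤ j ∧ u ⟨j - 1, h⟩ < k} := by
      rw [heightSeq]; exact Nat.sSup_mem hne hs_bdd
    obtain ⟨hh, h1, hlt⟩ := hX
    have : u ⟨j - 1, hjn⟩ ≤ u ⟨heightSeq n u k - 1, hh⟩ := by
      apply hu
      simp only [Fin.mk_le_mk]
      omega
    omega
  · intro hlt
    exact le_csSup hs_bdd ⟨hjn, hj1, hlt⟩

lemma step_eq {n : ℕ} (g : ℕ → ℕ) (j : Fin n) :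
    stepOfHeight n g j = ((Finset.Icc 1 n).filter (fun t => g t < (j : ℕ) + 1)).card := by
  rw [stepOfHeight, ← Set.ncard_coe_finset]
  congr 1
  ext t
  simp only [Finset.coe_filter, Finset.mem_Icc, Set.mem_setOf_eq]
  tauto

lemma step_mono {n : ℕ} (g : ℕ → ℕ) : Monotone (stepOfHeight n g) := by
  intro j j' hj
  rw [step_eq, step_eq]
  apply Finset.card_le_card
  intro x hx
  simp only [Finset.mem_filter, Finset.mem_Icc] at hx ⊢
  have : (j : ℕ) ≤ (j' : ℕ) := hj
  omega

lemma step_dyck {n : ℕ} {g : ℕ → ℕ} (hlb : ∀ t, 1 ≤ t → t ≤ n → t ≤ g t)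
    (k : Fin n) : stepOfHeight n g k ≤ (k : ℕ) := by
  rw [step_eq]
  calc ((Finset.Icc 1 n).filter (fun t => g t < (k : ℕ) + 1)).card
      ≤ (Finset.Icc 1 (k : ℕ)).card := by
        apply Finset.card_le_card
        intro x hx
        simp only [Finset.mem_filter, Finset.mem_Icc] at hx ⊢
        have := hlb x hx.1.1 hx.1.2
        omega
    _ = (k : ℕ) := by rw [Nat.card_Icc]; omega

lemma hs_step {n : ℕ} {g : ℕ → ℕ} (hmono : Monotone g)
    (hub : ∀ t, g t ≤ n) (hlb : ∀ t, 1 ≤ t → t ≤ n → t ≤ g t)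
    {t : ℕ} (ht1 : 1 ≤ t) (htn : t ≤ n) :
    heightSeq n (stepOfHeight n g) t = g t := by
  have hg1 : 1 ≤ g t := le_trans ht1 (hlb t ht1 htn)
  have hgn : g t - 1 < n := by have := hub t; omega
  apply le_antisymm
  · by_contra hc
    push_neg at hc
    set N := heightSeq n (stepOfHeight n g) t with hN
    have hNn : N ≤ n := hs_le_n
    have hN1 : 1 ≤ N := by omega
    have hNN : N - 1 < n := by omega
    have hvlt : stepOfHeight n g ⟨N - 1, hNN⟩ < t :=
      (hs_iff (step_mono g) hN1 hNN).mp (le_of_eq hN)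
    rw [step_eq] at hvlt
    have hsub : Finset.Icc 1 t ⊆
        (Finset.Icc 1 n).filter (fun s => g s < ((⟨N - 1, hNN⟩ : Fin n) : ℕ) + 1) := by
      intro s hs
      simp only [Finset.mem_filter, Finset.mem_Icc] at hs ⊢
      have h1 : g s ≤ g t := hmono hs.2
      refine ⟨⟨hs.1, le_trans hs.2 htn⟩, ?_⟩
      omega
    have := Finset.card_le_card hsub
    rw [Nat.card_Icc] at this
    omega
  · rw [hs_iff (step_mono g) hg1 hgn]
    rw [step_eq]
    calc ((Finset.Icc 1 n).filter (fun s => g s < ((⟨g t - 1, hgn⟩ : Fin n) : ℕ) + 1)).card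
        ≤ (Finset.Icc 1 (t - 1)).card := by
          apply Finset.card_le_card
          intro s hs
          simp only [Finset.mem_filter, Finset.mem_Icc] at hs ⊢
          refine ⟨hs.1.1, ?_⟩
          by_contra hc
          push_neg at hc
          have : g t ≤ g s := hmono (by omega : t ≤ s)
          omega
      _ < t := by rw [Nat.card_Icc]; omega

lemma glb {m n : ℕ} {u : Fin n → ℕ} (hu1 : Monotone u)
    (hu2 : ∀ k : Fin n, u k ≤ m * (k : ℕ)) (i : ℕ) {t : ℕ} (ht1 : 1 ≤ t) (htn : t ≤ n) :
    t ≤ heightSeq n u ((i + 1) + (t - 1) * m) := by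
  have hjn : t - 1 < n := by omega
  rw [hs_iff hu1 ht1 hjn]
  have h1 := hu2 ⟨t - 1, hjn⟩
  simp only [Fin.val_mk] at h1
  have h2 : m * (t - 1) = (t - 1) * m := mul_comm _ _
  omega

lemma gmono {m n : ℕ} (u : Fin n → ℕ) (i : ℕ) :
    Monotone (fun t => heightSeq n u ((i + 1) + (t - 1) * m)) := by
  intro t t' h
  apply hs_mono
  have : t - 1 ≤ t' - 1 := by omega
  exact Nat.add_le_add_left (Nat.mul_le_mul_right m this) _

lemma strip_rec {m n : ℕ} {u : Fin n → ℕ} (hu1 : Monotone u)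
    (hu2 : ∀ k : Fin n, u k ≤ m * (k : ℕ)) (i : Fin m) {t : ℕ} (ht1 : 1 ≤ t) (htn : t ≤ n) :
    heightSeq n (strip m n u i) t = heightSeq n u (((i : ℕ) + 1) + (t - 1) * m) := by
  simp only [strip]
  exact hs_step (gmono u (i : ℕ)) (fun _ => hs_le_n) (fun s h1 h2 => glb hu1 hu2 _ h1 h2) ht1 htn

lemma rec_le {m n : ℕ} (hm : 0 < m) {u v : Fin n → ℕ} (hu1 : Monotone u)
    (hu2 : ∀ k : Fin n, u k ≤ m * (k : ℕ)) (hv1 : Monotone v)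
    (hh : ∀ k, 1 ≤ k → k ≤ m * n → heightSeq n u k = heightSeq n v k) (j : Fin n) :
    v j ≤ u j := by
  have hjlt : (j : ℕ) < n := j.isLt
  have hk : u j + 1 ≤ m * n := by
    have h1 := hu2 j
    have h2 : m * ((j : ℕ) + 1) ≤ m * n := Nat.mul_le_mul_left m hjlt
    have h3 : m * ((j : ℕ) + 1) = m * (j : ℕ) + m := Nat.mul_succ m _
    omega
  have hjn : (j : ℕ) + 1 - 1 < n := by omega
  have hmk : (⟨(j : ℕ) + 1 - 1, hjn⟩ : Fin n) = j := by ext; simp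
  have h1 : ((j : ℕ) + 1) ≤ heightSeq n u (u j + 1) := by
    rw [hs_iff hu1 (by omega) hjn, hmk]
    omega
  rw [hh _ (by omega) hk, hs_iff hv1 (by omega) hjn, hmk] at h1
  omega

/-- For `u ∈ D_n^(m)`: each component of the strip decomposition `δ(u)` is a Dyck path in
`D_n` whose height sequence is `(h_i, h_{i+m}, …, h_{i+(n−1)m})`; the map `δ` is
injective on `D_n^(m)`; and the components of `δ(u)` are increasing in dominance order
(componentwise comparison of height sequences). -/
theorem stmt_18 (m n : ℕ) (hm : 0 < m) (hn : 0 < n) (u : Fin n → ℕ)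
    (hu : Monotone u ∧ ∀ k : Fin n, u k ≤ m * (k : ℕ)) :
    (∀ i : Fin m,
      (Monotone (strip m n u i) ∧ ∀ k : Fin n, strip m n u i k ≤ (k : ℕ)) ∧
      ∀ t : ℕ, 1 ≤ t → t ≤ n →
        heightSeq n (strip m n u i) t = heightSeq n u (((i : ℕ) + 1) + (t - 1) * m)) ∧
    (∀ v : Fin n → ℕ, (Monotone v ∧ ∀ k : Fin n, v k ≤ m * (k : ℕ)) →
      strip m n u = strip m n v → u = v) ∧
    (∀ i j : Fin m, i ≤ j → ∀ t : ℕ, 1 ≤ t → t ≤ n →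
      heightSeq n (strip m n u i) t ≤ heightSeq n (strip m n u j) t) := by
  obtain ⟨hu1, hu2⟩ := hu
  refine ⟨?_, ?_, ?_⟩
  · intro i
    constructor
    · constructor
      · simp only [strip]; exact step_mono _
      · intro k
        simp only [strip]
        exact step_dyck (fun s h1 h2 => glb hu1 hu2 _ h1 h2) k
    · intro t ht1 htn
      exact strip_rec hu1 hu2 i ht1 htn
  · rintro v ⟨hv1, hv2⟩ heq
    have hh : ∀ k, 1 ≤ k → k ≤ m * n → heightSeq n u k = heightSeq n v k := by
      intro k hk1 hkn
      set i0 := (k - 1) % m with hi0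
      set t0 := (k - 1) / m + 1 with ht0
      have hi0m : i0 < m := Nat.mod_lt _ hm
      have hklt : k - 1 < n * m := by
        have hmn : n * m = m * n := mul_comm _ _
        omega
      have ht0n : t0 ≤ n := by
        rw [ht0]
        have : (k - 1) / m < n := (Nat.div_lt_iff_lt_mul hm).mpr hklt
        omega
      have heqk : (i0 + 1) + (t0 - 1) * m = k := by
        have key := Nat.mod_add_div (k - 1) m
        have h2 : (t0 - 1) * m = m * ((k - 1) / m) := by rw [ht0]; simp [mul_comm]
        rw [← hi0] at key
        set X := m * ((k - 1) / m) with hX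
        omega
      have r1 := strip_rec hu1 hu2 ⟨i0, hi0m⟩ (t := t0) (by rw [ht0]; exact Nat.le_add_left 1 _) ht0n
      have r2 := strip_rec hv1 hv2 ⟨i0, hi0m⟩ (t := t0) (by rw [ht0]; exact Nat.le_add_left 1 _) ht0n
      rw [heq] at r1
      simp only [Fin.val_mk] at r1 r2
      rw [heqk] at r1 r2
      exact r1.symm.trans r2
    funext j
    exact le_antisymm (rec_le hm hv1 hv2 hu1 (fun k a b => (hh k a b).symm) j)
      (rec_le hm hu1 hu2 hv1 hh j)
  · intro i j hij t ht1 htn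
    rw [strip_rec hu1 hu2 i ht1 htn, strip_rec hu1 hu2 j ht1 htn]
    apply hs_mono
    have : (i : ℕ) ≤ (j : ℕ) := hij
    omega
end

section
/- Let m, n > 0 be integers and let (q₁, …, q_m) be a tuple of Dyck paths in D_n with q₁ ≤_dom q₂ ≤_dom ⋯ ≤_dom q_m, and let h^{(j)} = (h₁^{(j)}, …, h_n^{(j)}) be the height sequence of q_j. Then (q₁, …, q_m) lies in the image of the strip-decomposition map δ : D_n^(m) → (D_n)^m if and only if h_i^{(k)} ≤ h_{i+1}^{(j)} for all i ∈ {1, …, n−2} and all indices 1 ≤ j < k ≤ m. -/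
lemma my_sSup_le {s : Set ℕ} {b : ℕ} (h : ∀ x ∈ s, x ≤ b) : sSup s ≤ b := by
  rcases s.eq_empty_or_nonempty with rfl | hs
  · simp
  · exact csSup_le hs h

lemma heightSeq_le {n : ℕ} {u : Fin n → ℕ} {k b : ℕ}
    (h : ∀ j : ℕ, 1 ≤ j → ∀ hj : j - 1 < n, u ⟨j - 1, hj⟩ < k → j ≤ b) :
    heightSeq n u k ≤ b := by
  apply my_sSup_le
  rintro x ⟨hx, h1, h2⟩
  exact h x h1 hx h2

lemma heightSeq_le_n {n : ℕ} (u : Fin n → ℕ) (k : ℕ) : heightSeq n u k ≤ n := by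
  apply heightSeq_le
  intro j h1 hj _
  omega

lemma le_heightSeq {n : ℕ} {u : Fin n → ℕ} {k t : ℕ} (h1 : 1 ≤ t) (h2 : t - 1 < n)
    (h3 : u ⟨t - 1, h2⟩ < k) : t ≤ heightSeq n u k := by
  refine le_csSup ?_ ⟨h2, h1, h3⟩
  refine ⟨n, ?_⟩
  rintro x ⟨hx, hx1, _⟩
  omega

lemma heightSeq_mono {n : ℕ} (u : Fin n → ℕ) {k k' : ℕ} (h : k ≤ k') :
    heightSeq n u k ≤ heightSeq n u k' := by
  apply my_sSup_le
  rintro x ⟨hx, h1, h2⟩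
  exact le_heightSeq h1 hx (lt_of_lt_of_le h2 h)

lemma heightSeq_le_of_ge {n : ℕ} {u : Fin n → ℕ} (hu : Monotone u) {k b : ℕ} (hb : b < n)
    (h : k ≤ u ⟨b, hb⟩) : heightSeq n u k ≤ b := by
  apply heightSeq_le
  intro j h1 hj h2
  by_contra hc
  exact absurd (lt_of_le_of_lt (le_trans h (hu (show (⟨b, hb⟩ : Fin n) ≤ ⟨j-1, hj⟩ by
    simp [Fin.le_def]; omega))) h2) (lt_irrefl _)

lemma stepOfHeight_eq (n : ℕ) (g : ℕ → ℕ) (j : Fin n) :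
    stepOfHeight n g j = ((Finset.Icc 1 n).filter (fun t => g t ≤ (j : ℕ))).card := by
  rw [stepOfHeight, ← Set.ncard_coe_finset]
  congr 1
  ext t
  simp [Nat.lt_succ_iff, and_assoc]

/-- stepOfHeight inverts heightSeq on Dyck paths. -/
lemma stepOfHeight_heightSeq {n : ℕ} {u : Fin n → ℕ} (hu : Monotone u)
    (hub : ∀ k : Fin n, u k ≤ (k : ℕ)) (j : Fin n) :
    stepOfHeight n (heightSeq n u) j = u j := by
  rw [stepOfHeight_eq]
  have : ((Finset.Icc 1 n).filter (fun t => heightSeq n u t ≤ (j : ℕ))) =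
      Finset.Icc 1 (u j) := by
    ext t
    simp only [Finset.mem_filter, Finset.mem_Icc]
    constructor
    · rintro ⟨⟨ht1, htn⟩, hle⟩
      refine ⟨ht1, ?_⟩
      by_contra hc
      push_neg at hc
      have : (j : ℕ) + 1 ≤ heightSeq n u t := by
        apply le_heightSeq (by omega) (by simpa using j.isLt)
        simpa using hc
      omega
    · rintro ⟨ht1, htj⟩
      have hjn := j.isLt
      have hjj := hub j
      refine ⟨⟨ht1, by omega⟩, ?_⟩
      apply heightSeq_le_of_ge hu j.isLt
      simpa using htj
  rw [this]
  simp

/-- heightSeq inverts stepOfHeight on valid height sequences. -/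
lemma heightSeq_stepOfHeight {n : ℕ} {g : ℕ → ℕ}
    (hmono : ∀ s t : ℕ, 1 ≤ s → s ≤ t → t ≤ n → g s ≤ g t)
    (hub : ∀ t : ℕ, 1 ≤ t → t ≤ n → g t ≤ n)
    (hlb : ∀ t : ℕ, 1 ≤ t → t ≤ n → t ≤ g t)
    {t : ℕ} (ht1 : 1 ≤ t) (htn : t ≤ n) :
    heightSeq n (stepOfHeight n g) t = g t := by
  have hgt1 : 1 ≤ g t := le_trans ht1 (hlb t ht1 htn)
  have hgtn : g t ≤ n := hub t ht1 htn
  apply le_antisymm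
  · apply heightSeq_le
    intro j h1 hj h2
    by_contra hc
    push_neg at hc
    rw [stepOfHeight_eq] at h2
    simp only [Fin.val_mk] at h2
    have hsub : Finset.Icc 1 t ⊆
        (Finset.Icc 1 n).filter (fun s => g s ≤ j - 1) := by
      intro s hs
      simp only [Finset.mem_Icc] at hs
      simp only [Finset.mem_filter, Finset.mem_Icc]
      have := hmono s t hs.1 hs.2 htn
      exact ⟨⟨hs.1, by omega⟩, by omega⟩
    have := Finset.card_le_card hsub
    simp at this
    omega
  · apply le_heightSeq hgt1 (by omega)
    rw [stepOfHeight_eq]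
    simp only [Fin.val_mk]
    have hsub : (Finset.Icc 1 n).filter (fun s => g s ≤ g t - 1)
        ⊆ Finset.Icc 1 (t - 1) := by
      intro s hs
      simp only [Finset.mem_filter, Finset.mem_Icc] at hs
      simp only [Finset.mem_Icc]
      refine ⟨hs.1.1, ?_⟩
      by_contra hc
      have := hmono t s ht1 (by omega) hs.1.2
      omega
    have := Finset.card_le_card hsub
    simp at this
    omega

/-- A dominance-increasing tuple `(q₁, …, q_m)` of Dyck paths in `D_n`, with height
sequences `h^{(j)}`, lies in the image of the strip decomposition
`δ : D_n^(m) → (D_n)^m` iff `h_i^{(k)} ≤ h_{i+1}^{(j)}` for all `i ∈ {1,…,n−2}` and all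
`1 ≤ j < k ≤ m`. -/
theorem stmt_19 (m n : ℕ) (hm : 0 < m) (hn : 0 < n) (q : Fin m → Fin n → ℕ)
    (hq : ∀ i : Fin m, Monotone (q i) ∧ ∀ k : Fin n, q i k ≤ (k : ℕ))
    (hdom : ∀ i j : Fin m, i ≤ j → ∀ t : ℕ, 1 ≤ t → t ≤ n →
      heightSeq n (q i) t ≤ heightSeq n (q j) t) :
    (∃ u : Fin n → ℕ, (Monotone u ∧ ∀ k : Fin n, u k ≤ m * (k : ℕ)) ∧
        strip m n u = q) ↔
      (∀ t : ℕ, 1 ≤ t → t ≤ n - 2 → ∀ i j : Fin m, i < j →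
        heightSeq n (q j) t ≤ heightSeq n (q i) (t + 1)) := by
  constructor
  · rintro ⟨u, ⟨humono, huub⟩, rfl⟩
    intro t ht1 ht2 i j hij
    have hn3 : 3 ≤ n := by omega
    have key : ∀ (a : Fin m) (s : ℕ), 1 ≤ s → s ≤ n →
        heightSeq n (strip m n u a) s = heightSeq n u (((a : ℕ) + 1) + (s - 1) * m) := by
      intro a s hs1 hsn
      simp only [strip]
      apply heightSeq_stepOfHeight
      · intro s' t' h1 h2 h3
        apply heightSeq_mono
        have := Nat.mul_le_mul_right m (Nat.sub_le_sub_right h2 1)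
        omega
      · intro t' h1 h2
        exact heightSeq_le_n u _
      · intro t' h1 h2
        apply le_heightSeq h1 (by omega)
        have := huub ⟨t' - 1, by omega⟩
        simp only [Fin.val_mk] at this
        have hmc : m * (t' - 1) = (t' - 1) * m := Nat.mul_comm _ _
        omega
      · exact hs1
      · exact hsn
    rw [key j t ht1 (by omega), key i (t + 1) (by omega) (by omega)]
    apply heightSeq_mono
    obtain ⟨t', rfl⟩ : ∃ t', t = t' + 1 := ⟨t - 1, by omega⟩
    simp only [Nat.add_sub_cancel]
    have h1 : (t' + 1) * m = t' * m + m := by ring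
    have h2 : (j : ℕ) < m := j.isLt
    omega
  · intro hcond
    classical
    have hq1 : ∀ (a : Fin m) (s : ℕ), 1 ≤ s → s ≤ n → s ≤ heightSeq n (q a) s := by
      intro a s h1 h2
      apply le_heightSeq h1 (by omega)
      have := (hq a).2 ⟨s - 1, by omega⟩
      simp only [Fin.val_mk] at this
      omega
    have hqn : ∀ a : Fin m, heightSeq n (q a) n = n := fun a =>
      le_antisymm (heightSeq_le_n _ _) (hq1 a n hn le_rfl)
    set H : ℕ → ℕ := fun p => heightSeq n (q ⟨(p - 1) % m, Nat.mod_lt _ hm⟩) ((p - 1) / m + 1)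
      with hH
    have hmoddiv : ∀ t r : ℕ, r < m → (t * m + r) % m = r ∧ (t * m + r) / m = t := by
      intro t r hr
      constructor
      · rw [mul_comm, Nat.mul_add_mod, Nat.mod_eq_of_lt hr]
      · rw [mul_comm, Nat.mul_add_div hm, Nat.div_eq_of_lt hr, add_zero]
    have hHval : ∀ p t i : ℕ, p = t * m + i + 1 → ∀ hi' : i < m,
        H p = heightSeq n (q ⟨i, hi'⟩) (t + 1) := by
      intro p t i hp hi'
      have e1 : (p - 1) % m = i := by rw [show p - 1 = t * m + i by omega]; exact (hmoddiv t i hi').1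
      have e2 : (p - 1) / m = t := by rw [show p - 1 = t * m + i by omega]; exact (hmoddiv t i hi').2
      simp only [hH, e1, e2]
    have hdivlt : ∀ p, 1 ≤ p → p ≤ m * n → (p - 1) / m + 1 ≤ n := by
      intro p h1 h2
      have h0 : 0 < m * n := Nat.mul_pos hm hn
      have : (p - 1) / m < n := Nat.div_lt_of_lt_mul (by omega)
      omega
    have hHub : ∀ p, H p ≤ n := fun p => heightSeq_le_n _ _
    have hHlb : ∀ p, 1 ≤ p → p ≤ m * n → (p - 1) / m + 1 ≤ H p := by
      intro p h1 h2
      exact hq1 _ ((p - 1) / m + 1) (Nat.le_add_left 1 _) (hdivlt p h1 h2)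
    have hstep : ∀ p, 1 ≤ p → p + 1 ≤ m * n → H p ≤ H (p + 1) := by
      intro p h1 h2
      obtain ⟨t, i, him, hpm⟩ : ∃ t i, i < m ∧ p = t * m + i + 1 :=
        ⟨(p - 1) / m, (p - 1) % m, Nat.mod_lt _ hm, by
          have h := Nat.div_add_mod (p - 1) m
          have hc : m * ((p - 1) / m) = ((p - 1) / m) * m := Nat.mul_comm _ _
          omega⟩
      have htn : t + 1 ≤ n := by
        have h := hdivlt p h1 (by omega)
        rwa [show p - 1 = t * m + i by omega, (hmoddiv t i him).2] at h
      rw [hHval p t i hpm him]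
      by_cases hcase : i + 1 < m
      · rw [hHval (p + 1) t (i + 1) (by omega) hcase]
        exact hdom ⟨i, him⟩ ⟨i + 1, hcase⟩ (by simp [Fin.le_def]) (t + 1) (by omega) htn
      · have hieq : i = m - 1 := by omega
        have hexp : (t + 1) * m = t * m + m := by ring
        rw [hHval (p + 1) (t + 1) 0 (by omega) hm]
        have ht2n : t + 2 ≤ n := by
          have h := hdivlt (p + 1) (by omega) h2
          rwa [show p + 1 - 1 = (t + 1) * m + 0 by omega, (hmoddiv (t + 1) 0 hm).2] at h
        by_cases hm1 : m = 1
        · have : (⟨i, him⟩ : Fin m) = ⟨0, hm⟩ := by apply Fin.ext; simp; omega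
          rw [this]
          exact heightSeq_mono _ (by omega)
        · by_cases hlast : t + 1 ≤ n - 2
          · exact hcond (t + 1) (by omega) hlast ⟨0, hm⟩ ⟨i, him⟩ (by simp [Fin.lt_def]; omega)
          · have hteq : t + 2 = n := by omega
            rw [hteq, hqn]
            exact heightSeq_le_n _ _
    have hmonoHd : ∀ d p, 1 ≤ p → p + d ≤ m * n → H p ≤ H (p + d) := by
      intro d
      induction d with
      | zero => intro p _ _; exact le_rfl
      | succ d ih =>
        intro p h1 h2
        exact le_trans (ih p h1 (by omega))
          (by rw [show p + (d + 1) = (p + d) + 1 by omega]; exact hstep (p + d) (by omega) (by omega))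
    have hmonoH : ∀ p p', 1 ≤ p → p ≤ p' → p' ≤ m * n → H p ≤ H p' := by
      intro p p' h1 h2 h3
      have := hmonoHd (p' - p) p h1 (by omega)
      rwa [show p + (p' - p) = p' by omega] at this
    set u : Fin n → ℕ := fun j => ((Finset.Icc 1 (m * n)).filter (fun p => H p ≤ (j : ℕ))).card
      with hu
    have hkey : ∀ p, 1 ≤ p → p ≤ m * n → heightSeq n u p = H p := by
      intro p h1 h2
      apply le_antisymm
      · apply heightSeq_le
        intro j hj1 hjlt hlt
        by_contra hc
        push_neg at hc
        simp only [hu, Fin.val_mk] at hlt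
        have hsub : Finset.Icc 1 p ⊆ (Finset.Icc 1 (m * n)).filter (fun p' => H p' ≤ j - 1) := by
          intro p' hp'
          simp only [Finset.mem_Icc] at hp'
          simp only [Finset.mem_filter, Finset.mem_Icc]
          exact ⟨⟨hp'.1, by omega⟩, le_trans (hmonoH p' p hp'.1 hp'.2 h2) (by omega)⟩
        have := Finset.card_le_card hsub
        simp at this
        omega
      · rcases Nat.eq_zero_or_pos (H p) with h0 | hpos
        · omega
        · apply le_heightSeq hpos (by have := hHub p; omega)
          simp only [hu, Fin.val_mk]
          have hsub : (Finset.Icc 1 (m * n)).filter (fun p' => H p' ≤ H p - 1) ⊆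
              Finset.Icc 1 (p - 1) := by
            intro p' hp'
            simp only [Finset.mem_filter, Finset.mem_Icc] at hp'
            simp only [Finset.mem_Icc]
            refine ⟨hp'.1.1, ?_⟩
            by_contra hc
            have := hmonoH p p' h1 (by omega) hp'.1.2
            omega
          have := Finset.card_le_card hsub
          simp at this
          omega
    refine ⟨u, ⟨?_, ?_⟩, ?_⟩
    · intro a b hab
      simp only [hu]
      apply Finset.card_le_card
      intro p hp
      simp only [Finset.mem_filter] at *
      exact ⟨hp.1, le_trans hp.2 hab⟩
    · intro k
      simp only [hu]
      calc ((Finset.Icc 1 (m * n)).filter (fun p => H p ≤ (k : ℕ))).card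
          ≤ (Finset.Icc 1 (m * (k : ℕ))).card := by
            apply Finset.card_le_card
            intro p hp
            simp only [Finset.mem_filter, Finset.mem_Icc] at hp ⊢
            have hlb := hHlb p hp.1.1 hp.1.2
            have : (p - 1) / m < (k : ℕ) := by omega
            have := (Nat.div_lt_iff_lt_mul hm).1 this
            have hmc : (k : ℕ) * m = m * (k : ℕ) := Nat.mul_comm _ _
            omega
        _ = m * (k : ℕ) := by simp
    · funext a j
      simp only [strip]
      rw [stepOfHeight_eq, ← stepOfHeight_heightSeq (hq a).1 (hq a).2 j, stepOfHeight_eq]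
      congr 1
      apply Finset.filter_congr
      intro t htmem
      simp only [Finset.mem_Icc] at htmem
      have : heightSeq n u (((a : ℕ) + 1) + (t - 1) * m) = heightSeq n (q a) t := by
        obtain ⟨t', rfl⟩ : ∃ t', t = t' + 1 := ⟨t - 1, by omega⟩
        simp only [Nat.add_sub_cancel]
        have hple : (a : ℕ) + 1 + t' * m ≤ m * n := by
          have h1 : t' + 1 ≤ n := htmem.2
          have h2 : (t' + 1) * m ≤ n * m := Nat.mul_le_mul_right m h1
          have h3 : (t' + 1) * m = t' * m + m := by ring
          have h4 : (a : ℕ) < m := a.isLt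
          have h5 : n * m = m * n := Nat.mul_comm _ _
          omega
        rw [hkey _ (by omega) hple, hHval _ t' (a : ℕ) (by omega) a.isLt]
      rw [this]
end
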